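/- Let q > 1. For every z ∈ Q_s and every w ∈ q·(∂Q_s ∖ (P_x ∪ P_{−x})): D(z,w) ≥ (1 + q^{1−α} − 2^α·(q + 1 + s(q−1))^{1−α}) / (κ̄_s·(α−1)). -/

import Mathlib

open MeasureTheory Metric
open scoped ENNReal NNReal Pointwise RealInnerProductSpace

/-- The `D`-length of the linear segment from `a` to `b`, parametrized by `μ`-length:
`μ(b-a) · ∫_0^1 f(a + t(b-a))⁻¹ dt`. -/
noncomputable def segLen {d : ℕ} (μ f : EuclideanSpace ℝ (Fin d) → ℝ)
    (a b : EuclideanSpace ℝ (Fin d)) : ℝ≥0∞ :=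
  ENNReal.ofReal (μ (b - a)) *
    ∫⁻ t in Set.Ioo (0 : ℝ) 1, ENNReal.ofReal ((f (a + t • (b - a)))⁻¹)

/-- `D(z,w)`: the infimum of `D`-lengths of piecewise linear paths from `z` to `w`,
encoded via their finite sequences of vertices. -/
noncomputable def Dmet {d : ℕ} (μ f : EuclideanSpace ℝ (Fin d) → ℝ)
    (z w : EuclideanSpace ℝ (Fin d)) : ℝ≥0∞ :=
  ⨅ (n : ℕ) (p : Fin (n + 1) → EuclideanSpace ℝ (Fin d)) (_ : p 0 = z)
    (_ : p (Fin.last n) = w),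
    ∑ i : Fin n, segLen μ f (p i.castSucc) (p i.succ)

private lemma aux_calc {α q s T κ : ℝ} (hα : 1 < α) (hq : 1 < q) (hs : 1 < s) (hκ : 0 < κ)
    (hT : s * (q - 1) ≤ T) :
    (1 + q ^ (1 - α) - 2 ^ α * (q + 1 + s * (q - 1)) ^ (1 - α)) / (κ * (α - 1)) ≤
      κ⁻¹ * ((((q + 1 + T) / 2) ^ (-α + 1) - (1:ℝ) ^ (-α + 1)) / (-α + 1)) +
        κ⁻¹ * ((((q + 1 + T) / 2) ^ (-α + 1) - q ^ (-α + 1)) / (-α + 1)) := by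
  have hα1 : 0 < α - 1 := by linarith
  have hM : (0:ℝ) < q + 1 + T := by nlinarith
  have hM0 : (0:ℝ) < q + 1 + s * (q - 1) := by nlinarith
  have hMle : q + 1 + s * (q - 1) ≤ q + 1 + T := by linarith
  have hdiv : ((q + 1 + T) / 2) ^ (-α + 1) = (q + 1 + T) ^ (-α + 1) / 2 ^ (-α + 1) :=
    Real.div_rpow hM.le (by norm_num) _
  have hBpos : (0:ℝ) < 2 ^ (-α + 1) := Real.rpow_pos_of_pos two_pos _
  have hCpos : (0:ℝ) < 2 ^ α := Real.rpow_pos_of_pos two_pos _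
  have h2α : (2:ℝ) ^ α * 2 ^ (-α + 1) = 2 := by
    rw [← Real.rpow_add two_pos]
    norm_num
  have hmono : (q + 1 + T) ^ (-α + 1) ≤ (q + 1 + s * (q - 1)) ^ (-α + 1) :=
    Real.rpow_le_rpow_of_nonpos hM0 hMle (by linarith)
  have hexp : (1 : ℝ) - α = -α + 1 := by ring
  rw [hexp, Real.one_rpow, hdiv]
  have hAB : (q + 1 + T) ^ (-α + 1) / 2 ^ (-α + 1) = 2 ^ α * (q + 1 + T) ^ (-α + 1) / 2 := by
    rw [div_eq_div_iff hBpos.ne' (by norm_num : (2:ℝ) ≠ 0)]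
    linear_combination (-(q + 1 + T) ^ (-α + 1)) * h2α
  rw [hAB]
  have hRHS : κ⁻¹ * ((2 ^ α * (q + 1 + T) ^ (-α + 1) / 2 - 1) / (-α + 1)) +
        κ⁻¹ * ((2 ^ α * (q + 1 + T) ^ (-α + 1) / 2 - q ^ (-α + 1)) / (-α + 1))
      = (1 + q ^ (-α + 1) - 2 ^ α * (q + 1 + T) ^ (-α + 1)) / (κ * (α - 1)) := by
    have hκ' : κ ≠ 0 := hκ.ne'
    have hα' : -α + 1 ≠ 0 := by intro h; apply hα1.ne'; linarith
    have hα'' : α - 1 ≠ 0 := hα1.ne'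
    field_simp
    ring
  rw [hRHS]
  have hnum : 1 + q ^ (-α + 1) - 2 ^ α * (q + 1 + s * (q - 1)) ^ (-α + 1) ≤
      1 + q ^ (-α + 1) - 2 ^ α * (q + 1 + T) ^ (-α + 1) := by
    have := mul_le_mul_of_nonneg_left hmono hCpos.le
    linarith
  have hD : 0 < κ * (α - 1) := mul_pos hκ hα1
  exact div_le_div_of_nonneg_right hnum hD.le

set_option maxHeartbeats 2000000 in
theorem stmt15 (d : ℕ) (hd : 0 < d)
    (μ : EuclideanSpace ℝ (Fin d) → ℝ)
    (hμ_add : ∀ z w, μ (z + w) ≤ μ z + μ w)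
    (hμ_smul : ∀ (c : ℝ) z, μ (c • z) = |c| * μ z)
    (hμ_eq : ∀ z, μ z = 0 ↔ z = 0)
    (ρ : ℝ) (hρ : IsLUB {r : ℝ | ∃ z : EuclideanSpace ℝ (Fin d), z ≠ 0 ∧ r = ‖z‖ / μ z} ρ)
    (x : EuclideanSpace ℝ (Fin d)) (hx1 : μ x = 1) (hx2 : ‖x‖ = ρ)
    (s : ℝ) (hs : 1 < s)
    (Q : Set (EuclideanSpace ℝ (Fin d)))
    (hQplane : ∀ z ∈ Q, ⟪z, x⟫ = 0)
    (hQcomp : IsCompact Q) (hQconv : Convex ℝ Q)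
    (hQsymm : ∀ z ∈ Q, -z ∈ Q)
    (hQball : ∀ z : EuclideanSpace ℝ (Fin d), ‖z‖ ≤ ρ → ⟪z, x⟫ = 0 → z ∈ Q)
    (Qs : Set (EuclideanSpace ℝ (Fin d)))
    (hQs : Qs = {y | ∃ z ∈ Q, ∃ t ∈ Set.Icc (-1 : ℝ) 1, y = s • z + t • x})
    (Px Pnx : Set (EuclideanSpace ℝ (Fin d)))
    (hPx : Px = {z | ⟪z - x, x⟫ = 0}) (hPnx : Pnx = {z | ⟪z + x, x⟫ = 0})
    (α : ℝ) (hα : 1 < α)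
    (fs : EuclideanSpace ℝ (Fin d) → ℝ) (K : NNReal)
    (hfsLip : LipschitzOnWith K fs (frontier Qs))
    (hfspos : ∀ z ∈ frontier Qs, 0 < fs z)
    (κ : ℝ) (hκ : IsLUB (fs '' frontier Qs) κ)
    (hfsflat : ∀ z ∈ frontier Qs ∩ (Px ∪ Pnx), fs z = κ)
    (f : EuclideanSpace ℝ (Fin d) → ℝ) (hf0 : f 0 = 0)
    (hf : ∀ z : EuclideanSpace ℝ (Fin d), z ≠ 0 →
      f z = gauge Qs z ^ α * fs ((gauge Qs z)⁻¹ • z))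
    (q : ℝ) (hq : 1 < q) :
    ∀ z ∈ Qs, ∀ w ∈ q • (frontier Qs \ (Px ∪ Pnx)),
      ENNReal.ofReal ((1 + q ^ (1 - α) - 2 ^ α * (q + 1 + s * (q - 1)) ^ (1 - α)) /
          (κ * (α - 1))) ≤ Dmet μ f z w := by
  intro z hz w hw
  obtain ⟨w₀, hw₀mem, rfl⟩ := hw
  -- basic facts about μ
  have hμ0 : μ 0 = 0 := (hμ_eq 0).2 rfl
  have hμneg : ∀ v, μ (-v) = μ v := by
    intro v
    have h := hμ_smul (-1) v
    simpa using h
  have hμnonneg : ∀ v, 0 ≤ μ v := by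
    intro v
    have h := hμ_add v (-v)
    rw [add_neg_cancel, hμ0, hμneg] at h
    linarith
  have hμpos : ∀ v : EuclideanSpace ℝ (Fin d), v ≠ 0 → 0 < μ v := by
    intro v hv
    rcases (hμnonneg v).lt_or_eq with h | h
    · exact h
    · exact absurd ((hμ_eq v).1 h.symm) hv
  have hxne : x ≠ 0 := by
    intro h
    rw [h, hμ0] at hx1
    norm_num at hx1
  have hρpos : 0 < ρ := by
    rw [← hx2]
    exact norm_pos_iff.2 hxne
  have hspos : (0:ℝ) < s := by linarith
  have hqpos : (0:ℝ) < q := by linarith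
  have hxx : ⟪x, x⟫ = ρ ^ 2 := by
    rw [real_inner_self_eq_norm_sq, hx2]
  have hnorm_le : ∀ v, ‖v‖ ≤ ρ * μ v := by
    intro v
    rcases eq_or_ne v 0 with rfl | hv
    · simp [hμ0]
    · have h : ‖v‖ / μ v ≤ ρ := hρ.1 ⟨v, hv, rfl⟩
      rwa [div_le_iff₀ (hμpos v hv)] at h
  -- orthogonal decomposition
  have hdecomp : ∀ y : EuclideanSpace ℝ (Fin d),
      ⟪y - (⟪y, x⟫ / ρ ^ 2) • x, x⟫ = 0 ∧ ‖y - (⟪y, x⟫ / ρ ^ 2) • x‖ ≤ ‖y‖ ∧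
        |⟪y, x⟫ / ρ ^ 2| * ρ ≤ ‖y‖ := by
    intro y
    set c := ⟪y, x⟫ / ρ ^ 2 with hc
    set z₁ := y - c • x with hz₁
    have h1 : ⟪z₁, x⟫ = 0 := by
      rw [hz₁, inner_sub_left, real_inner_smul_left, hxx, hc]
      field_simp
      ring
    have horth : ⟪z₁, c • x⟫ = 0 := by
      rw [real_inner_smul_right, h1, mul_zero]
    have hpyth : ‖y‖ ^ 2 = ‖z₁‖ ^ 2 + ‖c • x‖ ^ 2 := by
      have h2 := norm_add_sq_real z₁ (c • x)
      rw [horth] at h2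
      have h3 : z₁ + c • x = y := by rw [hz₁]; abel
      rw [h3] at h2
      linarith
    have hcx : ‖c • x‖ = |c| * ρ := by rw [norm_smul, Real.norm_eq_abs, hx2]
    refine ⟨h1, ?_, ?_⟩
    · nlinarith [norm_nonneg y, norm_nonneg z₁, norm_nonneg (c • x)]
    · rw [← hcx]
      nlinarith [norm_nonneg y, norm_nonneg z₁, norm_nonneg (c • x)]
  -- the ρ-ball is contained in Qs
  have hballQs : ∀ y : EuclideanSpace ℝ (Fin d), ‖y‖ ≤ ρ → y ∈ Qs := by
    intro y hy
    obtain ⟨h1, h2, h3⟩ := hdecomp y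
    have hz₁Q : s⁻¹ • (y - (⟪y, x⟫ / ρ ^ 2) • x) ∈ Q := by
      apply hQball
      · rw [norm_smul, Real.norm_eq_abs, abs_of_nonneg (by positivity : (0:ℝ) ≤ s⁻¹)]
        have hs1 : s⁻¹ ≤ 1 := by
          rw [inv_le_one_iff₀]
          right; linarith
        nlinarith [norm_nonneg (y - (⟪y, x⟫ / ρ ^ 2) • x), le_trans h2 hy]
      · rw [real_inner_smul_left, h1, mul_zero]
    have habs : |⟪y, x⟫ / ρ ^ 2| ≤ 1 := by
      have h4 := le_trans h3 hy
      nlinarith [abs_nonneg (⟪y, x⟫ / ρ ^ 2)]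
    rw [hQs]
    refine ⟨s⁻¹ • (y - (⟪y, x⟫ / ρ ^ 2) • x), hz₁Q, ⟪y, x⟫ / ρ ^ 2,
      ⟨(abs_le.1 habs).1, (abs_le.1 habs).2⟩, ?_⟩
    rw [smul_smul, mul_inv_cancel₀ hspos.ne', one_smul]
    abel
  -- the cylinder Qt
  set Qt : Set (EuclideanSpace ℝ (Fin d)) := {y | ∃ z ∈ Q, ∃ t : ℝ, y = z + t • x} with hQt
  have hballQt : ∀ y : EuclideanSpace ℝ (Fin d), ‖y‖ ≤ ρ → y ∈ Qt := by
    intro y hy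
    obtain ⟨h1, h2, h3⟩ := hdecomp y
    exact ⟨y - (⟪y, x⟫ / ρ ^ 2) • x, hQball _ (h2.trans hy) h1, ⟪y, x⟫ / ρ ^ 2, by abel⟩
  have hQsconv : Convex ℝ Qs := by
    rw [hQs]
    rintro y₁ ⟨z₁, hz₁, t₁, ht₁, rfl⟩ y₂ ⟨z₂, hz₂, t₂, ht₂, rfl⟩ aa bb haa hbb hab
    refine ⟨aa • z₁ + bb • z₂, hQconv hz₁ hz₂ haa hbb hab, aa * t₁ + bb * t₂, ⟨?_, ?_⟩, ?_⟩
    · nlinarith [ht₁.1, ht₁.2, ht₂.1, ht₂.2]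
    · nlinarith [ht₁.1, ht₁.2, ht₂.1, ht₂.2]
    · module
  have hQtconv : Convex ℝ Qt := by
    rintro y₁ ⟨z₁, hz₁, t₁, rfl⟩ y₂ ⟨z₂, hz₂, t₂, rfl⟩ aa bb haa hbb hab
    exact ⟨aa • z₁ + bb • z₂, hQconv hz₁ hz₂ haa hbb hab, aa * t₁ + bb * t₂, by module⟩
  have hQsnhds : Qs ∈ nhds (0 : EuclideanSpace ℝ (Fin d)) :=
    Filter.mem_of_superset (Metric.ball_mem_nhds 0 hρpos)
      (fun y hy => hballQs y (by rw [mem_ball, dist_zero_right] at hy; exact hy.le))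
  have hQtnhds : Qt ∈ nhds (0 : EuclideanSpace ℝ (Fin d)) :=
    Filter.mem_of_superset (Metric.ball_mem_nhds 0 hρpos)
      (fun y hy => hballQt y (by rw [mem_ball, dist_zero_right] at hy; exact hy.le))
  have hQsabs : Absorbent ℝ Qs := absorbent_nhds_zero hQsnhds
  have hQtabs : Absorbent ℝ Qt := absorbent_nhds_zero hQtnhds
  have hQscomp : IsCompact Qs := by
    have himg : Qs = (fun pr : (EuclideanSpace ℝ (Fin d)) × ℝ => s • pr.1 + pr.2 • x) ''
        (Q ×ˢ Set.Icc (-1:ℝ) 1) := by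
      rw [hQs]
      ext y
      constructor
      · rintro ⟨z₀, hz₀, t₀, ht₀, rfl⟩
        exact ⟨(z₀, t₀), ⟨hz₀, ht₀⟩, rfl⟩
      · rintro ⟨⟨z₀, t₀⟩, ⟨hz₀, ht₀⟩, rfl⟩
        exact ⟨z₀, hz₀, t₀, ht₀, rfl⟩
    rw [himg]
    exact (hQcomp.prod isCompact_Icc).image (by fun_prop)
  have hQsclosed : IsClosed Qs := hQscomp.isClosed
  have hQsbdd : Bornology.IsVonNBounded ℝ Qs :=
    (NormedSpace.isVonNBounded_iff ℝ).2 hQscomp.isBounded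
  have hQssymm : ∀ y ∈ Qs, -y ∈ Qs := by
    rw [hQs]
    rintro y ⟨z₀, hz₀, t₀, ht₀, rfl⟩
    exact ⟨-z₀, hQsymm z₀ hz₀, -t₀, ⟨by linarith [ht₀.2], by linarith [ht₀.1]⟩, by module⟩
  -- gauges are dominated by μ
  have hgauge_le : ∀ S : Set (EuclideanSpace ℝ (Fin d)), (∀ y, ‖y‖ ≤ ρ → y ∈ S) →
      ∀ v, gauge S v ≤ μ v := by
    intro S hS v
    rcases eq_or_ne v 0 with rfl | hv
    · rw [gauge_zero, hμ0]
    · apply gauge_le_of_mem (hμnonneg v)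
      refine Set.mem_smul_set.mpr ⟨(μ v)⁻¹ • v, hS _ ?_, ?_⟩
      · rw [norm_smul, Real.norm_eq_abs, abs_of_nonneg (inv_nonneg.2 (hμnonneg v)),
          inv_mul_eq_div, div_le_iff₀ (hμpos v hv)]
        linarith [hnorm_le v]
      · rw [smul_smul, mul_inv_cancel₀ (hμpos v hv).ne', one_smul]
  have hgQsμ : ∀ v, gauge Qs v ≤ μ v := hgauge_le Qs hballQs
  have hgQtμ : ∀ v, gauge Qt v ≤ μ v := hgauge_le Qt hballQt
  have hgsub : ∀ u v : EuclideanSpace ℝ (Fin d), gauge Qs (u + v) ≤ gauge Qs u + gauge Qs v :=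
    gauge_add_le hQsconv hQsabs
  -- facts about w₀ and κ
  have hfr₀ : w₀ ∈ frontier Qs := hw₀mem.1
  have hw₀Qs : w₀ ∈ Qs := hQsclosed.frontier_subset hfr₀
  have hκpos : 0 < κ := lt_of_lt_of_le (hfspos w₀ hfr₀) (hκ.1 ⟨w₀, hfr₀, rfl⟩)
  have hgw : gauge Qs (q • w₀) ≤ q := by
    rw [gauge_smul_of_nonneg hqpos.le, smul_eq_mul]
    nlinarith [gauge_le_one_of_mem hw₀Qs, gauge_nonneg (s := Qs) w₀]
  have hgz : gauge Qs z ≤ 1 := gauge_le_one_of_mem hz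
  -- lateral bound: gauge Qt w₀ ≥ s
  have hw₀Qs' : ∃ z' ∈ Q, ∃ t' ∈ Set.Icc (-1:ℝ) 1, w₀ = s • z' + t' • x := by
    rw [hQs] at hw₀Qs; exact hw₀Qs
  obtain ⟨z₂, hz₂Q, t₂, ht₂, hw₀eq⟩ := hw₀Qs'
  have hw₀x : ⟪w₀, x⟫ = t₂ * ρ ^ 2 := by
    rw [hw₀eq, inner_add_left, real_inner_smul_left, real_inner_smul_left,
      hQplane z₂ hz₂Q, hxx]
    ring
  have hρ2 : (ρ:ℝ) ^ 2 ≠ 0 := by positivity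
  have ht₂ne1 : t₂ ≠ 1 := by
    intro h
    apply hw₀mem.2
    left
    rw [hPx]
    show ⟪w₀ - x, x⟫ = 0
    rw [inner_sub_left, hw₀x, hxx, h]
    ring
  have ht₂ne1' : t₂ ≠ -1 := by
    intro h
    apply hw₀mem.2
    right
    rw [hPnx]
    show ⟪w₀ + x, x⟫ = 0
    rw [inner_add_left, hw₀x, hxx, h]
    ring
  have ht₂abs : |t₂| < 1 :=
    abs_lt.2 ⟨lt_of_le_of_ne ht₂.1 (Ne.symm ht₂ne1'), lt_of_le_of_ne ht₂.2 ht₂ne1⟩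
  have hgQtw₀ : s ≤ gauge Qt w₀ := by
    by_contra hlt
    push_neg at hlt
    obtain ⟨r, hr0, hrs, hmem⟩ := exists_lt_of_gauge_lt hQtabs hlt
    obtain ⟨y', hy'Qt, hw₀r⟩ := Set.mem_smul_set.1 hmem
    obtain ⟨z', hz'Q, t', hy'eq⟩ := hy'Qt
    have hw₀r' : w₀ = r • z' + (r * t') • x := by
      rw [← hw₀r, hy'eq]; module
    have h5 : ⟪w₀, x⟫ = (r * t') * ρ ^ 2 := by
      rw [hw₀r', inner_add_left, real_inner_smul_left, real_inner_smul_left,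
        hQplane z' hz'Q, hxx]
      ring
    have ht' : r * t' = t₂ := by
      have h6 := hw₀x.symm.trans h5
      have := mul_right_cancel₀ hρ2 h6
      linarith
    have hz₂' : s • z₂ = r • z' := by
      have h6 : s • z₂ + t₂ • x = r • z' + (r * t') • x := by rw [← hw₀eq, hw₀r']
      rw [ht'] at h6
      exact add_right_cancel h6
    set β := max (r / s) |t₂| with hβ
    have hβpos : 0 < β := lt_of_lt_of_le (div_pos hr0 hspos) (le_max_left _ _)
    have hβlt : β < 1 := max_lt ((div_lt_one hspos).2 hrs) ht₂abs
    have hQ0 : (0 : EuclideanSpace ℝ (Fin d)) ∈ Q := hQball 0 (by simp [hρpos.le]) (by simp)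
    have hrsβ : r ≤ s * β := by
      have h7 : r / s ≤ β := le_max_left _ _
      calc r = s * (r / s) := by field_simp
        _ ≤ s * β := by nlinarith
    have hcz : (r / (s * β)) • z' ∈ Q := by
      have hc1 : (0:ℝ) ≤ r / (s * β) := by positivity
      have hc2 : r / (s * β) ≤ 1 := by
        rw [div_le_one (by positivity)]
        exact hrsβ
      have := hQconv hz'Q hQ0 hc1 (show (0:ℝ) ≤ 1 - r / (s * β) by linarith)
        (show r / (s * β) + (1 - r / (s * β)) = 1 by ring)
      simpa using this
    have habsβ : |t₂ / β| ≤ 1 := by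
      rw [abs_div, abs_of_pos hβpos, div_le_one hβpos]
      exact le_max_right _ _
    have hyQs : s • ((r / (s * β)) • z') + (t₂ / β) • x ∈ Qs := by
      rw [hQs]
      exact ⟨_, hcz, t₂ / β, ⟨(abs_le.1 habsβ).1, (abs_le.1 habsβ).2⟩, rfl⟩
    have hw₀β : w₀ ∈ β • Qs := by
      refine Set.mem_smul_set.mpr ⟨_, hyQs, ?_⟩
      have h7 : β • (s • ((r / (s * β)) • z') + (t₂ / β) • x) = r • z' + t₂ • x := by
        rw [smul_add, smul_smul, smul_smul, smul_smul]
        congr 1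
        · congr 1
          field_simp
        · congr 1
          field_simp
      rw [h7, ← hz₂', ← hw₀eq]
    have h8 := gauge_le_of_mem hβpos.le hw₀β
    have hone : gauge Qs w₀ = 1 := (gauge_eq_one_iff_mem_frontier hQsconv hQsnhds).2 hfr₀
    rw [hone] at h8
    linarith
  have hgQtz : gauge Qt z ≤ s := by
    have hz' : ∃ z' ∈ Q, ∃ t' ∈ Set.Icc (-1:ℝ) 1, z = s • z' + t' • x := by
      rw [hQs] at hz; exact hz
    obtain ⟨z₀, hz₀Q, t₀, ht₀, hzeq⟩ := hz'
    apply gauge_le_of_mem hspos.le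
    refine Set.mem_smul_set.mpr ⟨z₀ + (t₀ / s) • x, ⟨z₀, hz₀Q, t₀ / s, rfl⟩, ?_⟩
    rw [hzeq, smul_add, smul_smul]
    congr 1
    congr 1
    field_simp
  have hTlb : s * (q - 1) ≤ μ (q • w₀ - z) := by
    have h1 : gauge Qt (q • w₀) ≤ gauge Qt (q • w₀ - z) + gauge Qt z := by
      have h2 := gauge_add_le hQtconv hQtabs (q • w₀ - z) z
      have h3 : q • w₀ - z + z = q • w₀ := by abel
      rwa [h3] at h2
    have h3 : q * s ≤ gauge Qt (q • w₀) := by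
      rw [gauge_smul_of_nonneg hqpos.le, smul_eq_mul]
      nlinarith [hgQtw₀]
    have h4 := hgQtμ (q • w₀ - z)
    nlinarith [hgQtz]
  -- pointwise bound on f⁻¹
  have hfb : ∀ y : EuclideanSpace ℝ (Fin d), y ≠ 0 → ∀ B : ℝ, gauge Qs y ≤ B →
      κ⁻¹ * B ^ (-α) ≤ (f y)⁻¹ := by
    intro y hy B hB
    have hgy : 0 < gauge Qs y := (gauge_pos hQsabs hQsbdd).2 hy
    have hgy' : gauge Qs ((gauge Qs y)⁻¹ • y) = 1 := by
      rw [gauge_smul_of_nonneg (inv_nonneg.2 hgy.le), smul_eq_mul, inv_mul_cancel₀ hgy.ne']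
    have hfr : (gauge Qs y)⁻¹ • y ∈ frontier Qs :=
      (gauge_eq_one_iff_mem_frontier hQsconv hQsnhds).1 hgy'
    have hfs1 : 0 < fs ((gauge Qs y)⁻¹ • y) := hfspos _ hfr
    have hfs2 : fs ((gauge Qs y)⁻¹ • y) ≤ κ := hκ.1 ⟨_, hfr, rfl⟩
    rw [hf y hy, mul_inv]
    have h1 : B ^ (-α) ≤ (gauge Qs y ^ α)⁻¹ := by
      rw [← Real.rpow_neg hgy.le]
      exact Real.rpow_le_rpow_of_nonpos hgy hB (by linarith)
    have h2 : κ⁻¹ ≤ (fs ((gauge Qs y)⁻¹ • y))⁻¹ := inv_anti₀ hfs1 hfs2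
    calc κ⁻¹ * B ^ (-α) = B ^ (-α) * κ⁻¹ := mul_comm _ _
      _ ≤ (gauge Qs y ^ α)⁻¹ * (fs ((gauge Qs y)⁻¹ • y))⁻¹ :=
          mul_le_mul h1 h2 (inv_nonneg.2 hκpos.le)
            (inv_nonneg.2 (Real.rpow_nonneg hgy.le α))
  -- now fix a path
  simp only [Dmet]
  refine le_iInf fun n => le_iInf fun p => le_iInf fun hp0 => le_iInf fun hpn => ?_
  classical
  set P : ℕ → EuclideanSpace ℝ (Fin d) := fun k => p ⟨min k n, by omega⟩ with hP
  have hPval : ∀ j : Fin (n + 1), P j.val = p j := by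
    intro j
    have hj := Nat.lt_succ_iff.mp j.isLt
    simp only [hP]
    exact congrArg p (Fin.ext (show min (j:ℕ) n = (j:ℕ) by omega))
  have hP0 : P 0 = z := by
    have := hPval 0
    simpa [hp0] using this
  have hPn : P n = q • w₀ := by
    have := hPval (Fin.last n)
    rw [Fin.val_last] at this
    rw [this, hpn]
  set L : ℕ → ℝ := fun j => if j < n then μ (P (j + 1) - P j) else 0 with hL
  set a : ℕ → ℝ := fun k => ∑ j ∈ Finset.range k, L j with ha
  have hLnn : ∀ j, 0 ≤ L j := by
    intro j
    simp only [hL]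
    split
    · exact hμnonneg _
    · exact le_refl 0
  have haS : ∀ k, a (k + 1) = a k + L k := fun k => Finset.sum_range_succ L k
  have ha0 : a 0 = 0 := by simp [ha]
  have hamono : ∀ k, a k ≤ a (k + 1) := fun k => by rw [haS]; linarith [hLnn k]
  set T := a n with hTdef
  have chain : ∀ k m : ℕ, k ≤ m → m ≤ n → μ (P m - P k) ≤ a m - a k := by
    intro k m hkm
    induction m, hkm using Nat.le_induction with
    | base => intro _; simp [hμ0]
    | succ m hkm ih =>
      intro hmn
      have hmn' : m ≤ n := by omega
      have hLm : L m = μ (P (m + 1) - P m) := by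
        simp only [hL]
        rw [if_pos (by omega : m < n)]
      have htri : μ (P (m + 1) - P k) ≤ μ (P (m + 1) - P m) + μ (P m - P k) := by
        have := hμ_add (P (m + 1) - P m) (P m - P k)
        rwa [sub_add_sub_cancel] at this
      have hih := ih hmn'
      rw [haS]
      rw [← hLm] at htri
      linarith
  have hTtotal : μ (q • w₀ - z) ≤ T := by
    have := chain 0 n (Nat.zero_le n) le_rfl
    rw [hP0, hPn, ha0] at this
    linarith
  have hTT : s * (q - 1) ≤ T := le_trans hTlb hTtotal
  have hT0 : 0 ≤ T := le_trans (by nlinarith) hTT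
  set ψ : ℝ → ℝ := fun u => κ⁻¹ * (max (min (1 + u) (q + T - u)) 1) ^ (-α) with hψ
  have hbase_pos : ∀ u : ℝ, (0:ℝ) < max (min (1 + u) (q + T - u)) 1 := fun u =>
    lt_of_lt_of_le one_pos (le_max_right _ _)
  have hbase_cont : Continuous fun u : ℝ => max (min (1 + u) (q + T - u)) 1 :=
    ((continuous_const.add continuous_id).min (continuous_const.sub continuous_id)).max
      continuous_const
  have hψcont : Continuous ψ := by
    rw [hψ]
    exact continuous_const.mul (hbase_cont.rpow_const fun u => Or.inl (hbase_pos u).ne')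
  have hψnn : ∀ u, 0 ≤ ψ u := fun u => by
    simp only [hψ]
    exact mul_nonneg (inv_nonneg.2 hκpos.le) (Real.rpow_nonneg (hbase_pos u).le _)
  -- per-segment lower bound
  have seg : ∀ k, k < n →
      ENNReal.ofReal (∫ u in a k..a (k + 1), ψ u) ≤ segLen μ f (P k) (P (k + 1)) := by
    intro k hk
    set v := P (k + 1) - P k with hv
    have hLk : L k = μ v := by
      simp only [hL]
      rw [if_pos hk]
    rcases eq_or_ne v 0 with hv0 | hv0
    · have hzero : a (k + 1) = a k := by rw [haS, hLk, hv0, hμ0, add_zero]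
      rw [hzero, intervalIntegral.integral_same]
      simp
    · have hLpos : 0 < μ v := hμpos v hv0
      have hpt : ∀ t : ℝ, t ∈ Set.Ioo (0:ℝ) 1 → P k + t • v ≠ 0 →
          ψ (a k + μ v * t) ≤ (f (P k + t • v))⁻¹ := by
        intro t ht hy
        have hμt : μ (t • v) = t * μ v := by
          rw [hμ_smul, abs_of_pos ht.1]
        have hμ1t : μ (P (k + 1) - (P k + t • v)) = (1 - t) * μ v := by
          have h9 : P (k + 1) - (P k + t • v) = (1 - t) • v := by
            rw [hv]; module
          rw [h9, hμ_smul, abs_of_pos (by linarith [ht.2] : (0:ℝ) < 1 - t)]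
        have hu1 : gauge Qs (P k + t • v) ≤ 1 + (a k + μ v * t) := by
          have h10 : gauge Qs (P k + t • v) ≤ gauge Qs z + gauge Qs (P k + t • v - z) := by
            have h10a := hgsub z (P k + t • v - z)
            have h10b : z + (P k + t • v - z) = P k + t • v := by abel
            rwa [h10b] at h10a
          have h11 : μ (P k + t • v - z) ≤ μ (t • v) + μ (P k - z) := by
            have h11a := hμ_add (t • v) (P k - z)
            have h11b : t • v + (P k - z) = P k + t • v - z := by abel
            rwa [h11b] at h11a
          have h12 : μ (P k - z) ≤ a k := by
            have h12a := chain 0 k (Nat.zero_le k) (le_of_lt hk)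
            rw [hP0, ha0] at h12a
            linarith
          have h13 := hgQsμ (P k + t • v - z)
          rw [hμt] at h11
          nlinarith [hgz]
        have hu2 : gauge Qs (P k + t • v) ≤ q + T - (a k + μ v * t) := by
          have h10 : gauge Qs (P k + t • v) ≤
              gauge Qs (q • w₀) + gauge Qs (q • w₀ - (P k + t • v)) := by
            have h10a := hgsub (q • w₀) (P k + t • v - q • w₀)
            have h10b : q • w₀ + (P k + t • v - q • w₀) = P k + t • v := by abel
            rw [h10b] at h10a
            have h10c : gauge Qs (P k + t • v - q • w₀) =
                gauge Qs (q • w₀ - (P k + t • v)) := by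
              rw [← neg_sub (q • w₀) (P k + t • v), gauge_neg hQssymm]
            rwa [h10c] at h10a
          have h11 : μ (q • w₀ - (P k + t • v)) ≤
              μ (q • w₀ - P (k + 1)) + μ (P (k + 1) - (P k + t • v)) := by
            have h11a := hμ_add (q • w₀ - P (k + 1)) (P (k + 1) - (P k + t • v))
            rwa [sub_add_sub_cancel] at h11a
          have h12 : μ (q • w₀ - P (k + 1)) ≤ T - a (k + 1) := by
            have h12a := chain (k + 1) n (by omega) le_rfl
            rw [hPn] at h12a
            linarith
          have h13 := hgQsμ (q • w₀ - (P k + t • v))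
          rw [hμ1t] at h11
          rw [haS, hLk] at h12
          nlinarith [hgw]
        have hbb : gauge Qs (P k + t • v) ≤
            max (min (1 + (a k + μ v * t)) (q + T - (a k + μ v * t))) 1 :=
          le_max_of_le_left (le_min hu1 hu2)
        have hfbv := hfb (P k + t • v) hy _ hbb
        simp only [hψ]
        exact hfbv
      have hcont2 : Continuous fun t : ℝ => ψ (a k + μ v * t) :=
        hψcont.comp (continuous_const.add (continuous_const.mul continuous_id))
      have hint' : IntegrableOn (fun t : ℝ => ψ (a k + μ v * t)) (Set.Icc (0:ℝ) 1) volume :=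
        hcont2.integrableOn_Icc
      have hint : IntegrableOn (fun t : ℝ => ψ (a k + μ v * t)) (Set.Ioo (0:ℝ) 1) volume :=
        hint'.mono_set Set.Ioo_subset_Icc_self
      have haeb : ∀ᵐ t ∂(volume.restrict (Set.Ioo (0:ℝ) 1)),
          ENNReal.ofReal (ψ (a k + μ v * t)) ≤ ENNReal.ofReal ((f (P k + t • v))⁻¹) := by
        have hsub : {t : ℝ | P k + t • v = 0}.Subsingleton := by
          intro t₁ h₁ t₂ h₂
          have h4 : P k + t₁ • v = P k + t₂ • v := by
            rw [Set.mem_setOf_eq] at h₁ h₂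
            rw [h₁, h₂]
          have h3 : t₁ • v = t₂ • v := add_left_cancel h4
          have h5 : (t₁ - t₂) • v = 0 := by rw [sub_smul, h3, sub_self]
          rcases smul_eq_zero.1 h5 with h | h
          · exact sub_eq_zero.1 h
          · exact absurd h hv0
        have hnull : volume {t : ℝ | P k + t • v = 0} = 0 := hsub.measure_zero _
        have hae0 : ∀ᵐ t : ℝ, ¬(P k + t • v = 0) := by
          rw [ae_iff]
          simpa using hnull
        filter_upwards [ae_restrict_of_ae hae0, ae_restrict_mem measurableSet_Ioo] with t ht1 ht2
        exact ENNReal.ofReal_le_ofReal (hpt t ht2 ht1)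
      have heq3 : μ v * ∫ t in Set.Ioo (0:ℝ) 1, ψ (a k + μ v * t) = ∫ u in a k..a (k + 1), ψ u := by
        rw [show (∫ t in Set.Ioo (0:ℝ) 1, ψ (a k + μ v * t)) =
            ∫ t in (0:ℝ)..1, ψ (a k + μ v * t) by
          rw [intervalIntegral.integral_of_le zero_le_one, integral_Ioc_eq_integral_Ioo]]
        rw [intervalIntegral.integral_comp_add_mul ψ hLpos.ne' (a k)]
        rw [smul_eq_mul, ← mul_assoc, mul_inv_cancel₀ hLpos.ne', one_mul, mul_zero, add_zero,
          mul_one, ← hLk, ← haS]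
      calc ENNReal.ofReal (∫ u in a k..a (k + 1), ψ u)
          = ENNReal.ofReal (μ v * ∫ t in Set.Ioo (0:ℝ) 1, ψ (a k + μ v * t)) := by rw [heq3]
        _ = ENNReal.ofReal (μ v) * ENNReal.ofReal (∫ t in Set.Ioo (0:ℝ) 1, ψ (a k + μ v * t)) :=
            ENNReal.ofReal_mul (hμnonneg v)
        _ = ENNReal.ofReal (μ v) *
            ∫⁻ t in Set.Ioo (0:ℝ) 1, ENNReal.ofReal (ψ (a k + μ v * t)) := by
            rw [MeasureTheory.ofReal_integral_eq_lintegral_ofReal hint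
              (Filter.Eventually.of_forall fun t => hψnn _)]
        _ ≤ ENNReal.ofReal (μ v) *
            ∫⁻ t in Set.Ioo (0:ℝ) 1, ENNReal.ofReal ((f (P k + t • v))⁻¹) :=
            mul_le_mul' le_rfl (lintegral_mono_ae haeb)
        _ = segLen μ f (P k) (P (k + 1)) := by
            simp only [segLen, hv]
  -- sum the segment bounds
  have hofsum : ENNReal.ofReal (∫ u in (0:ℝ)..T, ψ u)
      ≤ ∑ k ∈ Finset.range n, segLen μ f (P k) (P (k + 1)) := by
    have hadj : ∑ k ∈ Finset.range n, ∫ u in a k..a (k + 1), ψ u = ∫ u in (a 0)..(a n), ψ u :=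
      intervalIntegral.sum_integral_adjacent_intervals fun k _ => hψcont.intervalIntegrable _ _
    rw [ha0] at hadj
    calc ENNReal.ofReal (∫ u in (0:ℝ)..T, ψ u)
        = ENNReal.ofReal (∑ k ∈ Finset.range n, ∫ u in a k..a (k + 1), ψ u) := by
          rw [hadj, ← hTdef]
      _ = ∑ k ∈ Finset.range n, ENNReal.ofReal (∫ u in a k..a (k + 1), ψ u) :=
          ENNReal.ofReal_sum_of_nonneg fun k _ =>
            intervalIntegral.integral_nonneg (hamono k) fun u _ => hψnn u
      _ ≤ ∑ k ∈ Finset.range n, segLen μ f (P k) (P (k + 1)) :=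
          Finset.sum_le_sum fun k hk => seg k (Finset.mem_range.1 hk)
  have hsum_eq : ∑ i : Fin n, segLen μ f (p i.castSucc) (p i.succ)
      = ∑ k ∈ Finset.range n, segLen μ f (P k) (P (k + 1)) := by
    rw [← Fin.sum_univ_eq_sum_range fun k => segLen μ f (P k) (P (k + 1))]
    apply Finset.sum_congr rfl
    intro i _
    have h1 : p i.castSucc = P i.val := by
      rw [← hPval i.castSucc, Fin.coe_castSucc]
    have h2 : p i.succ = P (i.val + 1) := by
      rw [← hPval i.succ, Fin.val_succ]
    rw [h1, h2]
  -- evaluate the integral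
  have hclaim : (1 + q ^ (1 - α) - 2 ^ α * (q + 1 + s * (q - 1)) ^ (1 - α)) / (κ * (α - 1))
      ≤ ∫ u in (0:ℝ)..T, ψ u := by
    set tm := (T + q - 1) / 2 with htm
    have htm0 : 0 ≤ tm := by rw [htm]; linarith
    have htmT : tm ≤ T := by
      rw [htm]
      nlinarith [hTT]
    have hsplit : (∫ u in (0:ℝ)..tm, ψ u) + ∫ u in tm..T, ψ u = ∫ u in (0:ℝ)..T, ψ u :=
      intervalIntegral.integral_add_adjacent_intervals
        (hψcont.intervalIntegrable 0 tm) (hψcont.intervalIntegrable tm T)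
    have hαne : (-α : ℝ) ≠ -1 := by
      intro hcon
      have : α = 1 := by linarith
      linarith
    have hc1 : ∫ u in (0:ℝ)..tm, ψ u =
        κ⁻¹ * ((((q + 1 + T) / 2) ^ (-α + 1) - (1:ℝ) ^ (-α + 1)) / (-α + 1)) := by
      have he1 : ∫ u in (0:ℝ)..tm, ψ u = ∫ u in (0:ℝ)..tm, κ⁻¹ * (1 + u) ^ (-α) := by
        apply intervalIntegral.integral_congr
        intro u hu
        rw [Set.uIcc_of_le htm0] at hu
        have hu1 : 0 ≤ u := hu.1
        have hu2 : u ≤ (T + q - 1) / 2 := by rw [← htm]; exact hu.2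
        simp only [hψ]
        rw [min_eq_left (by linarith : 1 + u ≤ q + T - u),
          max_eq_left (by linarith : (1:ℝ) ≤ 1 + u)]
      rw [he1, intervalIntegral.integral_const_mul]
      simp only [intervalIntegral.integral_comp_add_left (fun u : ℝ => u ^ (-α)) 1]
      rw [integral_rpow (Or.inr ⟨hαne, Set.notMem_uIcc_of_lt (by linarith) (by linarith)⟩)]
      rw [show (1:ℝ) + tm = (q + 1 + T) / 2 by rw [htm]; ring,
        show (1:ℝ) + 0 = 1 by norm_num]
    have hc2 : ∫ u in tm..T, ψ u =
        κ⁻¹ * ((((q + 1 + T) / 2) ^ (-α + 1) - q ^ (-α + 1)) / (-α + 1)) := by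
      have he2 : ∫ u in tm..T, ψ u = ∫ u in tm..T, κ⁻¹ * (q + T - u) ^ (-α) := by
        apply intervalIntegral.integral_congr
        intro u hu
        rw [Set.uIcc_of_le htmT] at hu
        have hu1 : (T + q - 1) / 2 ≤ u := by rw [← htm]; exact hu.1
        have hu2 : u ≤ T := hu.2
        simp only [hψ]
        rw [min_eq_right (by linarith : q + T - u ≤ 1 + u),
          max_eq_left (by linarith : (1:ℝ) ≤ q + T - u)]
      rw [he2, intervalIntegral.integral_const_mul]
      rw [intervalIntegral.integral_comp_sub_left (fun u : ℝ => u ^ (-α)) (q + T)]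
      rw [integral_rpow (Or.inr ⟨hαne,
        Set.notMem_uIcc_of_lt (by linarith : (0:ℝ) < q + T - T) (by
          have : tm ≤ T := htmT
          linarith : (0:ℝ) < q + T - tm)⟩)]
      rw [show q + T - tm = (q + 1 + T) / 2 by rw [htm]; ring,
        show q + T - T = q by ring]
    calc (1 + q ^ (1 - α) - 2 ^ α * (q + 1 + s * (q - 1)) ^ (1 - α)) / (κ * (α - 1))
        ≤ κ⁻¹ * ((((q + 1 + T) / 2) ^ (-α + 1) - (1:ℝ) ^ (-α + 1)) / (-α + 1))
          + κ⁻¹ * ((((q + 1 + T) / 2) ^ (-α + 1) - q ^ (-α + 1)) / (-α + 1)) :=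
          aux_calc hα hq hs hκpos hTT
      _ = (∫ u in (0:ℝ)..tm, ψ u) + ∫ u in tm..T, ψ u := by rw [hc1, hc2]
      _ = ∫ u in (0:ℝ)..T, ψ u := hsplit
  calc ENNReal.ofReal ((1 + q ^ (1 - α) - 2 ^ α * (q + 1 + s * (q - 1)) ^ (1 - α)) /
        (κ * (α - 1)))
      ≤ ENNReal.ofReal (∫ u in (0:ℝ)..T, ψ u) := ENNReal.ofReal_le_ofReal hclaim
    _ ≤ ∑ k ∈ Finset.range n, segLen μ f (P k) (P (k + 1)) := hofsum
    _ = ∑ i : Fin n, segLen μ f (p i.castSucc) (p i.succ) := hsum_eq.symm
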